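/- For distinct indeterminates X_1,...,X_m and any natural number N ≥ m-1, the sum over k of X_k^N divided by the product over j≠k of (X_k - X_j) equals the complete homogeneous symmetric polynomial of degree N-m+1 in X_1,...,X_m, i.e. the sum of all monomials X_1^{i_1}···X_m^{i_m} with i_1+...+i_m = N-m+1 and all i_j ≥ 0. -/

import Mathlib

open Finset

section Aux

variable {ι : Type*} [DecidableEq ι]

section hKdef

variable {K : Type*} [CommRing K]

/-- Complete homogeneous symmetric function of degree `d` in the variables `x i`, `i ∈ s`. -/
noncomputable def hK (x : ι → K) (s : Finset ι) (d : ℕ) : K :=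
  ∑ μ ∈ s.sym d, ((μ : Multiset ι).map x).prod

lemma hK_zero (x : ι → K) (s : Finset ι) : hK x s 0 = 1 := by
  simp only [hK, Finset.sym_zero, Finset.sum_singleton]
  rfl

lemma hK_singleton (x : ι → K) (a : ι) (d : ℕ) : hK x {a} d = x a ^ d := by
  simp [hK, Finset.sym_singleton, Sym.coe_replicate, Multiset.map_replicate,
    Multiset.prod_replicate]

lemma filter_mem_sym {s : Finset ι} {a : ι} (ha : a ∈ s) (d : ℕ) :
    (s.sym (d + 1)).filter (fun μ => a ∈ μ) = (s.sym d).image (Sym.cons a) := by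
  ext μ
  simp only [Finset.mem_filter, Finset.mem_image]
  constructor
  · rintro ⟨hμ, haμ⟩
    refine ⟨μ.erase a haμ, ?_, Sym.cons_erase haμ⟩
    rw [Finset.mem_sym_iff] at hμ ⊢
    intro b hb
    rw [← Sym.mem_coe, Sym.coe_erase] at hb
    exact hμ b (Sym.mem_coe.mp (Multiset.mem_of_mem_erase hb))
  · rintro ⟨ν, hν, rfl⟩
    rw [Finset.mem_sym_iff] at hν ⊢
    refine ⟨?_, Sym.mem_cons_self a ν⟩
    intro b hb
    rcases Sym.mem_cons.mp hb with rfl | hb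
    · exact ha
    · exact hν b hb

lemma hK_rec (x : ι → K) {s : Finset ι} {a : ι} (ha : a ∈ s) (d : ℕ) :
    hK x s (d + 1) = x a * hK x s d + hK x (s.erase a) (d + 1) := by
  classical
  have hsplit := Finset.sum_filter_add_sum_filter_not (s.sym (d + 1)) (fun μ => a ∈ μ)
    (fun μ => ((μ : Multiset ι).map x).prod)
  have h1 : ∑ μ ∈ (s.sym (d + 1)).filter (fun μ => a ∈ μ),
      ((μ : Multiset ι).map x).prod = x a * hK x s d := by
    rw [filter_mem_sym ha, Finset.sum_image (by
      intro μ hμ ν hν h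
      exact (Sym.cons_inj_right a μ ν).mp h)]
    rw [hK, Finset.mul_sum]
    refine Finset.sum_congr rfl fun ν _ => ?_
    rw [Sym.coe_cons, Multiset.map_cons, Multiset.prod_cons]
  have h2 : (s.sym (d + 1)).filter (fun μ => ¬ a ∈ μ) = (s.erase a).sym (d + 1) := by
    ext μ
    simp only [Finset.mem_filter, Finset.mem_sym_iff, Finset.mem_erase]
    constructor
    · rintro ⟨hμ, haμ⟩
      exact fun b hb => ⟨fun h => haμ (h ▸ hb), hμ b hb⟩
    · intro h
      exact ⟨fun b hb => (h b hb).2, fun haμ => (h a haμ).1 rfl⟩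
  rw [hK, ← hsplit, h1, h2]
  rfl

end hKdef

section DD

variable {K : Type*} [Field K]

lemma sym_erase_comm (s : Finset ι) (a b : ι) :
    (s.erase a).erase b = (s.erase b).erase a := by
  ext c; simp only [Finset.mem_erase]; tauto

lemma DD_erase (x : ι → K) {s : Finset ι} {a : ι} (ha : a ∈ s)
    (hx : ∀ i ∈ s, ∀ j ∈ s, i ≠ j → x i ≠ x j) (N : ℕ) :
    ∑ k ∈ s.erase a, x k ^ N / ∏ j ∈ (s.erase a).erase k, (x k - x j) =
      ∑ k ∈ s, (x k - x a) * (x k ^ N / ∏ j ∈ s.erase k, (x k - x j)) := by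
  rw [← Finset.add_sum_erase s _ ha]
  rw [sub_self, zero_mul, zero_add]
  refine Finset.sum_congr rfl fun k hk => ?_
  have hks : k ∈ s := Finset.mem_of_mem_erase hk
  have hka : k ≠ a := Finset.ne_of_mem_erase hk
  have hak : a ∈ s.erase k := Finset.mem_erase.mpr ⟨fun h => hka h.symm, ha⟩
  have hprod : ∏ j ∈ s.erase k, (x k - x j) =
      (x k - x a) * ∏ j ∈ (s.erase k).erase a, (x k - x j) :=
    (Finset.mul_prod_erase _ _ hak).symm
  have hne : x k - x a ≠ 0 := sub_ne_zero.mpr (hx k hks a ha hka)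
  have hP : ∏ j ∈ (s.erase k).erase a, (x k - x j) ≠ 0 := by
    refine Finset.prod_ne_zero_iff.mpr fun j hj => ?_
    have hjs : j ∈ s := Finset.mem_of_mem_erase (Finset.mem_of_mem_erase hj)
    have hjk : j ≠ k := Finset.ne_of_mem_erase (Finset.mem_of_mem_erase hj)
    exact sub_ne_zero.mpr (hx k hks j hjs fun h => hjk h.symm)
  rw [sym_erase_comm, hprod]
  field_simp

lemma DD_step (x : ι → K) {s : Finset ι} {a b : ι} (ha : a ∈ s) (hb : b ∈ s)
    (hx : ∀ i ∈ s, ∀ j ∈ s, i ≠ j → x i ≠ x j) (N : ℕ) :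
    (∑ k ∈ s.erase a, x k ^ N / ∏ j ∈ (s.erase a).erase k, (x k - x j)) -
      (∑ k ∈ s.erase b, x k ^ N / ∏ j ∈ (s.erase b).erase k, (x k - x j)) =
      (x b - x a) * ∑ k ∈ s, x k ^ N / ∏ j ∈ s.erase k, (x k - x j) := by
  rw [DD_erase x ha hx N, DD_erase x hb hx N, ← Finset.sum_sub_distrib, Finset.mul_sum]
  refine Finset.sum_congr rfl fun k _ => ?_
  ring

lemma DD_main (x : ι → K) (s : Finset ι) (hs : s.Nonempty)
    (hx : ∀ i ∈ s, ∀ j ∈ s, i ≠ j → x i ≠ x j) (N : ℕ) :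
    ∑ k ∈ s, x k ^ N / ∏ j ∈ s.erase k, (x k - x j) =
      if s.card ≤ N + 1 then hK x s (N + 1 - s.card) else 0 := by
  classical
  induction s using Finset.strongInduction generalizing N with
  | _ s ih =>
    rcases eq_or_lt_of_le (Nat.succ_le_of_lt (Finset.Nonempty.card_pos hs)) with h1 | h2
    · -- card = 1
      obtain ⟨a, rfl⟩ := Finset.card_eq_one.mp h1.symm
      simp only [Finset.card_singleton]
      rw [if_pos (Nat.le_add_left 1 N)]
      rw [Finset.sum_singleton, Finset.erase_singleton, Finset.prod_empty, div_one,
        hK_singleton]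
      congr 1
    · -- card ≥ 2
      obtain ⟨a, ha, b, hb, hab⟩ := Finset.one_lt_card.mp h2
      have hba : x b - x a ≠ 0 := sub_ne_zero.mpr (hx b hb a ha (Ne.symm hab))
      have hsa : (s.erase a).Nonempty := by
        refine ⟨b, Finset.mem_erase.mpr ⟨Ne.symm hab, hb⟩⟩
      have hsb : (s.erase b).Nonempty := ⟨a, Finset.mem_erase.mpr ⟨hab, ha⟩⟩
      have hxa : ∀ i ∈ s.erase a, ∀ j ∈ s.erase a, i ≠ j → x i ≠ x j := fun i hi j hj h =>
        hx i (Finset.mem_of_mem_erase hi) j (Finset.mem_of_mem_erase hj) h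
      have hxb : ∀ i ∈ s.erase b, ∀ j ∈ s.erase b, i ≠ j → x i ≠ x j := fun i hi j hj h =>
        hx i (Finset.mem_of_mem_erase hi) j (Finset.mem_of_mem_erase hj) h
      have iha := ih (s.erase a) (Finset.erase_ssubset ha) hsa hxa N
      have ihb := ih (s.erase b) (Finset.erase_ssubset hb) hsb hxb N
      have hstep := DD_step x ha hb hx N
      rw [iha, ihb] at hstep
      have hcard_a : (s.erase a).card = s.card - 1 := Finset.card_erase_of_mem ha
      have hcard_b : (s.erase b).card = s.card - 1 := Finset.card_erase_of_mem hb
      rw [hcard_a, hcard_b] at hstep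
      have key : ∑ k ∈ s, x k ^ N / ∏ j ∈ s.erase k, (x k - x j) =
          ((if s.card - 1 ≤ N + 1 then hK x (s.erase a) (N + 1 - (s.card - 1)) else 0) -
            (if s.card - 1 ≤ N + 1 then hK x (s.erase b) (N + 1 - (s.card - 1)) else 0)) /
            (x b - x a) := by
        rw [hstep, mul_comm, mul_div_assoc, div_self hba, mul_one]
      rw [key]
      by_cases hle : s.card ≤ N + 1
      · -- main case
        rw [if_pos hle]
        have hle' : s.card - 1 ≤ N + 1 := by omega
        rw [if_pos hle', if_pos hle']
        set d := N + 1 - s.card with hd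
        have hdd : N + 1 - (s.card - 1) = d + 1 := by omega
        rw [hdd]
        have ra := hK_rec x ha d
        have rb := hK_rec x hb d
        have : hK x (s.erase a) (d + 1) - hK x (s.erase b) (d + 1) =
            (x b - x a) * hK x s d := by
          linear_combination rb - ra
        rw [this, mul_comm, mul_div_assoc, div_self hba, mul_one]
      · rw [if_neg hle]
        by_cases hle2 : s.card - 1 ≤ N + 1
        · -- N + 1 = s.card - 1
          have : N + 1 - (s.card - 1) = 0 := by omega
          rw [if_pos hle2, if_pos hle2, this, hK_zero, hK_zero, sub_self, zero_div]
        · rw [if_neg hle2, if_neg hle2, sub_self, zero_div]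

end DD

section Bij

variable {K : Type*} [CommRing K]

lemma hK_univ {m : ℕ} (x : Fin m → K) (d : ℕ) :
    hK x Finset.univ d = ∑ i ∈ Finset.Nat.antidiagonalTuple m d, ∏ j, x j ^ i j := by
  classical
  rw [hK]
  symm
  refine Finset.sum_bij'
    (i := fun f hf => (⟨Finset.univ.val.bind fun j => Multiset.replicate (f j) j, ?_⟩ :
      Sym (Fin m) d))
    (j := fun μ hμ => fun j => (μ : Multiset (Fin m)).count j) ?_ ?_ ?_ ?_ ?_
  · -- card
    rw [Multiset.card_bind]
    have : ∑ j, f j = d := Finset.Nat.mem_antidiagonalTuple.mp hf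
    rw [← this, Finset.sum_eq_multiset_sum]
    exact congrArg Multiset.sum (Multiset.map_congr rfl fun j _ => Multiset.card_replicate (f j) j)
  · -- maps into sym
    intro f hf
    refine Finset.mem_sym_iff.mpr ?_
    intro a _
    exact Finset.mem_univ a
  · -- inverse maps into antidiagonalTuple
    intro μ hμ
    rw [Finset.Nat.mem_antidiagonalTuple]
    have h1 : ∑ j : Fin m, (μ : Multiset (Fin m)).count j = (μ : Multiset (Fin m)).card := by
      rw [← Multiset.toFinset_sum_count_eq (μ : Multiset (Fin m))]
      symm
      refine Finset.sum_subset (Finset.subset_univ _) fun a _ ha => ?_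
      exact Multiset.count_eq_zero.mpr fun h => ha (Multiset.mem_toFinset.mpr h)
    rw [h1]
    exact Sym.card_coe
  · -- left inverse
    intro f hf
    funext j
    show Multiset.count j ((Finset.univ.val.bind fun j => Multiset.replicate (f j) j) :
      Multiset (Fin m)) = f j
    rw [Multiset.count_bind]
    have h0 : ∀ a : Fin m, Multiset.count j (Multiset.replicate (f a) a) =
        if a = j then f a else 0 := fun a => Multiset.count_replicate j a (f a)
    simp only [h0]
    have h3 : (Multiset.map (fun b => if b = j then f b else 0) Finset.univ.val).sum =
        ∑ b : Fin m, if b = j then f b else 0 := rfl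
    rw [h3, Finset.sum_ite_eq' Finset.univ j f, if_pos (Finset.mem_univ j)]
  · -- right inverse
    intro μ hμ
    apply Subtype.ext
    show (Finset.univ.val.bind fun j => Multiset.replicate ((μ : Multiset (Fin m)).count j) j)
      = (μ : Multiset (Fin m))
    have hb : (Finset.univ.val.bind fun j =>
        Multiset.replicate ((μ : Multiset (Fin m)).count j) j) =
        ∑ j : Fin m, (μ : Multiset (Fin m)).count j • ({j} : Multiset (Fin m)) := by
      rw [Multiset.bind]
      simp only [Multiset.nsmul_singleton]
      rfl
    rw [hb]
    have hzero : ∀ a ∈ (Finset.univ : Finset (Fin m)),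
        a ∉ (μ : Multiset (Fin m)).toFinset →
        (μ : Multiset (Fin m)).count a • ({a} : Multiset (Fin m)) = 0 := by
      intro a _ ha
      have : (μ : Multiset (Fin m)).count a = 0 :=
        Multiset.count_eq_zero.mpr fun h => ha (Multiset.mem_toFinset.mpr h)
      rw [this, zero_smul]
    calc ∑ j : Fin m, (μ : Multiset (Fin m)).count j • ({j} : Multiset (Fin m))
        = ∑ a ∈ (μ : Multiset (Fin m)).toFinset,
            (μ : Multiset (Fin m)).count a • ({a} : Multiset (Fin m)) :=
          (Finset.sum_subset (Finset.subset_univ _) hzero).symm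
      _ = (μ : Multiset (Fin m)) := Multiset.toFinset_sum_count_nsmul_eq _
  · -- values agree
    intro f hf
    show ∏ j, x j ^ f j =
      (((Finset.univ.val.bind fun j => Multiset.replicate (f j) j) : Multiset (Fin m)).map
        x).prod
    rw [Multiset.map_bind, Multiset.prod_bind]
    simp only [Multiset.map_replicate, Multiset.prod_replicate]
    rfl

end Bij

end Aux

/-- Lagrange/partial-fraction identity: for distinct indeterminates
`X 1, ..., X m` and `N ≥ m - 1`, the weighted power sum equals the complete
homogeneous symmetric polynomial of degree `N - m + 1`. -/
theorem stmt0 (m N : ℕ) (hm : 1 ≤ m) (hN : m - 1 ≤ N) :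
    let R := MvPolynomial (Fin m) ℤ
    let K := FractionRing R
    let X : Fin m → K := fun k => algebraMap R K (MvPolynomial.X k)
    ∑ k : Fin m, (X k) ^ N / ∏ j ∈ Finset.univ.erase k, (X k - X j) =
      algebraMap R K
        (∑ i ∈ Finset.Nat.antidiagonalTuple m (N - (m - 1)),
          ∏ j : Fin m, MvPolynomial.X j ^ i j) := by
  intro R K X
  have : NeZero m := ⟨by omega⟩
  have hXinj : Function.Injective X := fun i j h => by
    exact MvPolynomial.X_injective (IsFractionRing.injective R K h)
  have hx : ∀ i ∈ (Finset.univ : Finset (Fin m)), ∀ j ∈ (Finset.univ : Finset (Fin m)),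
      i ≠ j → X i ≠ X j := fun i _ j _ hij h => hij (hXinj h)
  have hne : (Finset.univ : Finset (Fin m)).Nonempty := Finset.univ_nonempty
  have hmain := DD_main X Finset.univ hne hx N
  rw [Finset.card_univ, Fintype.card_fin] at hmain
  have hle : m ≤ N + 1 := by omega
  rw [if_pos hle] at hmain
  have hdeg : N + 1 - m = N - (m - 1) := by omega
  rw [hdeg] at hmain
  calc ∑ k : Fin m, (X k) ^ N / ∏ j ∈ Finset.univ.erase k, (X k - X j)
      = hK X Finset.univ (N - (m - 1)) := hmain
    _ = ∑ i ∈ Finset.Nat.antidiagonalTuple m (N - (m - 1)), ∏ j, X j ^ i j :=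
        hK_univ X (N - (m - 1))
    _ = algebraMap R K (∑ i ∈ Finset.Nat.antidiagonalTuple m (N - (m - 1)),
          ∏ j : Fin m, MvPolynomial.X j ^ i j) := by
        rw [map_sum]
        refine Finset.sum_congr rfl fun i _ => ?_
        rw [map_prod]
        refine Finset.prod_congr rfl fun j _ => ?_
        rw [map_pow]
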